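/- arXiv:2407.00457 — 6 statements merged into one kernel-verified Lean document; each statement's English description precedes it below -/
import Mathlib

section
/- Let n ≥ 1 be a natural number, let a and d be real numbers with a > d ≥ 0, let b ∈ (0,∞), and let α_1, …, α_n ∈ [0, π). Suppose u_1, …, u_n and v_1, …, v_n are complex numbers with |u_j − a| ≤ d and |v_j − a| ≤ d for every j. Set w = Σ_{j=1}^n u_j/(1 + b e^{iα_j}) + Σ_{j=1}^n v_j/(1 + b^{-1} e^{-iα_j}). Then a·n − d·Σ_{j=1}^n sec(α_j/2) ≤ Re(w) ≤ a·n + d·Σ_{j=1}^n sec(α_j/2). -/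
open Real Finset

lemma stmt0_term (b αj : ℝ) (hb : 0 < b) (hα : αj ∈ Set.Ico (0:ℝ) π)
    (u v : ℂ) (a d : ℝ) (hd : 0 ≤ d)
    (hu : ‖u - (a:ℂ)‖ ≤ d) (hv : ‖v - (a:ℂ)‖ ≤ d) :
    ‖u / (1 + (b : ℂ) * Complex.exp (Complex.I * (αj : ℂ)))
      + v / (1 + (b : ℂ)⁻¹ * Complex.exp (-(Complex.I * (αj : ℂ)))) - a‖
      ≤ d * (1 / Real.cos (αj / 2)) := by
  obtain ⟨hα0, hαπ⟩ := hα
  have hc : 0 < Real.cos (αj / 2) := by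
    apply Real.cos_pos_of_mem_Ioo
    constructor <;> [nlinarith [Real.pi_pos]; linarith]
  set e := Complex.exp (Complex.I * (αj : ℂ)) with he_def
  have he_ne : e ≠ 0 := Complex.exp_ne_zero _
  have hb' : (b : ℂ) ≠ 0 := by exact_mod_cast hb.ne'
  set z := 1 + (b : ℂ) * e with hz_def
  have habse : ‖e‖ = 1 := by simp [he_def, Complex.norm_exp]
  have he : e = Complex.cos αj + Complex.sin αj * Complex.I := by
    rw [he_def, mul_comm, Complex.exp_mul_I]
  have hA : ‖z‖ ^ 2 = 1 + 2*b*Real.cos αj + b^2 := by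
    rw [Complex.sq_norm, hz_def, he, Complex.normSq_apply]
    simp [Complex.cos_ofReal_re, Complex.sin_ofReal_re]
    nlinarith [Real.sin_sq_add_cos_sq αj]
  have hz_lb : (1+b) * Real.cos (αj/2) ≤ ‖z‖ := by
    have h2 : ((1+b) * Real.cos (αj/2))^2 ≤ ‖z‖ ^ 2 := by
      rw [hA]
      have hh := Real.cos_sq (αj/2)
      rw [show 2*(αj/2) = αj by ring] at hh
      nlinarith [Real.cos_le_one αj, sq_nonneg (1-b)]
    nlinarith [norm_nonneg z, mul_pos (by linarith : (0:ℝ) < 1+b) hc]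
  have hz_pos : 0 < ‖z‖ := lt_of_lt_of_le (mul_pos (by linarith) hc) hz_lb
  have hz_ne : z ≠ 0 := by
    intro h; rw [h] at hz_pos; simp at hz_pos
  have hz2 : 1 + (b : ℂ)⁻¹ * Complex.exp (-(Complex.I * (αj : ℂ))) = z * ((b:ℂ)⁻¹ * e⁻¹) := by
    rw [Complex.exp_neg, ← he_def, hz_def]
    field_simp
    ring
  have hkey : u / z + v / (z * ((b:ℂ)⁻¹ * e⁻¹)) - a
      = ((u - a) + (v - a) * ((b:ℂ) * e)) / z := by
    field_simp
    ring
  rw [hz2, hkey]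
  rw [norm_div]
  have hnum : ‖(u - a) + (v - a) * ((b:ℂ) * e)‖ ≤ d * (1 + b) := by
    calc ‖(u - a) + (v - a) * ((b:ℂ) * e)‖
        ≤ ‖u - a‖ + ‖(v - a) * ((b:ℂ) * e)‖ := norm_add_le _ _
      _ = ‖u - a‖ + ‖v - a‖ * (b * 1) := by
          rw [norm_mul, norm_mul, habse, Complex.norm_of_nonneg hb.le]
      _ ≤ d + d * (b * 1) := by gcongr
      _ = d * (1 + b) := by ring
  calc ‖(u - a) + (v - a) * ((b:ℂ) * e)‖ / ‖z‖
      ≤ (d * (1 + b)) / ((1+b) * Real.cos (αj/2)) := by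
        apply div_le_div₀ (by positivity) hnum (mul_pos (by linarith) hc) hz_lb
    _ = d * (1 / Real.cos (αj / 2)) := by
        field_simp

/-- the main combination lemma: if `|u j - a| ≤ d`, `|v j - a| ≤ d`,
and `w = ∑ u j / (1 + b e^{iα j}) + ∑ v j / (1 + b⁻¹ e^{-iα j})`, then
`a n - d ∑ sec (α j / 2) ≤ Re w ≤ a n + d ∑ sec (α j / 2)`. -/
theorem stmt_0 (n : ℕ) (hn : 1 ≤ n) (a d b : ℝ)
    (had : a > d) (hd : 0 ≤ d) (hb : 0 < b)
    (α : Fin n → ℝ) (hα : ∀ j, α j ∈ Set.Ico (0 : ℝ) π)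
    (u v : Fin n → ℂ)
    (hu : ∀ j, ‖u j - (a : ℂ)‖ ≤ d)
    (hv : ∀ j, ‖v j - (a : ℂ)‖ ≤ d)
    (w : ℂ)
    (hw : w = ∑ j, u j / (1 + (b : ℂ) * Complex.exp (Complex.I * (α j : ℂ)))
            + ∑ j, v j / (1 + (b : ℂ)⁻¹ * Complex.exp (-(Complex.I * (α j : ℂ))))) :
    a * n - d * ∑ j, 1 / Real.cos (α j / 2) ≤ w.re ∧
      w.re ≤ a * n + d * ∑ j, 1 / Real.cos (α j / 2) := by
  have hsum : w - (a : ℂ) * n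
      = ∑ j, (u j / (1 + (b : ℂ) * Complex.exp (Complex.I * (α j : ℂ)))
            + v j / (1 + (b : ℂ)⁻¹ * Complex.exp (-(Complex.I * (α j : ℂ)))) - (a : ℂ)) := by
    rw [hw, Finset.sum_sub_distrib, Finset.sum_add_distrib, Finset.sum_const,
      Finset.card_univ, Fintype.card_fin, nsmul_eq_mul]
    ring
  have habs : ‖w - (a : ℂ) * n‖ ≤ d * ∑ j, 1 / Real.cos (α j / 2) := by
    rw [hsum, Finset.mul_sum]
    refine le_trans (norm_sum_le _ _) (Finset.sum_le_sum fun j _ => ?_)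
    exact stmt0_term b (α j) hb (hα j) (u j) (v j) a d hd (hu j) (hv j)
  have hre : |w.re - a * n| ≤ d * ∑ j, 1 / Real.cos (α j / 2) := by
    have h1 := Complex.abs_re_le_norm (w - (a : ℂ) * n)
    have h2 : (w - (a : ℂ) * n).re = w.re - a * n := by simp
    rw [h2] at h1
    exact h1.trans habs
  obtain ⟨h1, h2⟩ := abs_le.mp hre
  constructor <;> linarith
end

section
/- Let n ≥ 1 be a natural number, let a and d be real numbers with a > d ≥ 0, let b ∈ (0,∞), and let α_1, …, α_n ∈ [0, π). Suppose u_1, …, u_n and v_1, …, v_n are complex numbers with |u_j − a| ≤ d and |v_j − a| ≤ d for every j, and set w = Σ_{j=1}^n u_j/(1 + b e^{iα_j}) + Σ_{j=1}^n v_j/(1 + b^{-1} e^{-iα_j}). Then n·a − d · Σ_{j=1}^n (1 + b)/√(1 + 2b cos α_j + b²) ≤ Re(w) ≤ n·a + d · Σ_{j=1}^n (1 + b)/√(1 + 2b cos α_j + b²). -/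
open Real Finset

/-- intermediate two-sided bound for the combination `w` in terms of
`(1 + b)/√(1 + 2 b cos α_j + b²)`. -/
theorem stmt_4 (n : ℕ) (hn : 1 ≤ n) (a d b : ℝ)
    (had : a > d) (hd : 0 ≤ d) (hb : 0 < b)
    (α : Fin n → ℝ) (hα : ∀ j, α j ∈ Set.Ico (0 : ℝ) π)
    (u v : Fin n → ℂ)
    (hu : ∀ j, ‖u j - (a : ℂ)‖ ≤ d)
    (hv : ∀ j, ‖v j - (a : ℂ)‖ ≤ d)
    (w : ℂ)
    (hw : w = ∑ j, u j / (1 + (b : ℂ) * Complex.exp (Complex.I * (α j : ℂ)))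
            + ∑ j, v j / (1 + (b : ℂ)⁻¹ * Complex.exp (-(Complex.I * (α j : ℂ))))) :
    n * a - d * ∑ j, (1 + b) / Real.sqrt (1 + 2 * b * Real.cos (α j) + b ^ 2) ≤ w.re ∧
      w.re ≤ n * a + d * ∑ j, (1 + b) / Real.sqrt (1 + 2 * b * Real.cos (α j) + b ^ 2) := by
  have hbne : (b : ℂ) ≠ 0 := by exact_mod_cast hb.ne'
  set q : Fin n → ℝ := fun j => 1 + 2 * b * Real.cos (α j) + b ^ 2 with hqdef
  have hqpos : ∀ j, 0 < q j := by
    intro j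
    have h1 : Real.cos π < Real.cos (α j) :=
      Real.cos_lt_cos_of_nonneg_of_le_pi (hα j).1 le_rfl (hα j).2
    rw [Real.cos_pi] at h1
    have := sq_nonneg (1 - b)
    simp only [hqdef]
    nlinarith
  set s : Fin n → ℂ := fun j => 1 + (b : ℂ) * Complex.exp (Complex.I * (α j : ℂ)) with hsdef
  set t : Fin n → ℂ := fun j => 1 + (b : ℂ)⁻¹ * Complex.exp (-(Complex.I * (α j : ℂ))) with htdef
  have habs_s : ∀ j, ‖s j‖ = Real.sqrt (q j) := by
    intro j
    rw [Complex.norm_def]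
    congr 1
    have e1 : Complex.exp (Complex.I * (α j : ℂ)) =
        (Real.cos (α j) : ℂ) + (Real.sin (α j) : ℂ) * Complex.I := by
      rw [mul_comm, Complex.exp_mul_I, ← Complex.ofReal_cos, ← Complex.ofReal_sin]
    simp only [hsdef, e1, Complex.normSq_apply]
    simp [Complex.add_re, Complex.add_im, Complex.mul_re, Complex.mul_im, Complex.cos_ofReal_re, Complex.sin_ofReal_re, hqdef]
    have := Real.sin_sq_add_cos_sq (α j)
    nlinarith
  have hs_ne : ∀ j, s j ≠ 0 := by
    intro j h
    have h0 : ‖s j‖ = 0 := by simp [h]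
    rw [habs_s j] at h0
    exact absurd h0 (Real.sqrt_pos.mpr (hqpos j)).ne'
  have ht_eq : ∀ j, t j = Complex.exp (-(Complex.I * (α j : ℂ))) * (b : ℂ)⁻¹ * s j := by
    intro j
    simp only [htdef, hsdef, Complex.exp_neg]
    field_simp [Complex.exp_ne_zero]
    ring
  have habs_t : ∀ j, ‖t j‖ = b⁻¹ * Real.sqrt (q j) := by
    intro j
    rw [ht_eq j, norm_mul, norm_mul, Complex.norm_exp, habs_s j]
    have : (-(Complex.I * (α j : ℂ))).re = 0 := by simp
    rw [this, Real.exp_zero, norm_inv, Complex.norm_real, Real.norm_eq_abs, abs_of_pos hb, one_mul]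
  have ht_ne : ∀ j, t j ≠ 0 := by
    intro j h
    have h0 : ‖t j‖ = 0 := by simp [h]
    rw [habs_t j] at h0
    have : (0:ℝ) < b⁻¹ * Real.sqrt (q j) :=
      mul_pos (inv_pos.mpr hb) (Real.sqrt_pos.mpr (hqpos j))
    exact absurd h0 this.ne'
  have key : ∀ j, (1 : ℂ) / s j + 1 / t j = 1 := by
    intro j
    have h1 : (1 : ℂ) / t j = (b : ℂ) * Complex.exp (Complex.I * (α j : ℂ)) / s j := by
      rw [ht_eq j, one_div, mul_inv, mul_inv, Complex.exp_neg, inv_inv, inv_inv]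
      ring
    rw [h1, ← add_div]
    exact div_self (hs_ne j)
  -- decompose w = n*a + E
  set E : ℂ := (∑ j, (u j - (a : ℂ)) / s j) + ∑ j, (v j - (a : ℂ)) / t j with hEdef
  have hw' : w = (∑ j, u j / s j) + ∑ j, v j / t j := hw
  have hwE : w = ((n * a : ℝ) : ℂ) + E := by
    rw [hw', hEdef]
    have h1 : ∀ j : Fin n, u j / s j = (a : ℂ) / s j + (u j - a) / s j := by
      intro j; rw [← add_div]; congr 1; ring
    have h2 : ∀ j : Fin n, v j / t j = (a : ℂ) / t j + (v j - a) / t j := by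
      intro j; rw [← add_div]; congr 1; ring
    have h3 : (∑ j, ((a : ℂ) / s j + (a : ℂ) / t j)) = ((n * a : ℝ) : ℂ) := by
      have h4 : ∀ j ∈ Finset.univ, ((a : ℂ) / s j + (a : ℂ) / t j) = (a : ℂ) := by
        intro j _
        have : (a : ℂ) / s j + (a : ℂ) / t j = a * (1 / s j + 1 / t j) := by ring
        rw [this, key j, mul_one]
      rw [Finset.sum_congr rfl h4, Finset.sum_const, Finset.card_univ, Fintype.card_fin,
        nsmul_eq_mul]
      push_cast; ring
    calc (∑ j, u j / s j) + ∑ j, v j / t j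
        = (∑ j, ((a : ℂ) / s j + (a : ℂ) / t j))
            + ((∑ j, (u j - (a : ℂ)) / s j) + ∑ j, (v j - (a : ℂ)) / t j) := by
          simp only [Finset.sum_congr rfl (fun j _ => h1 j),
            Finset.sum_congr rfl (fun j _ => h2 j), Finset.sum_add_distrib]
          ring
      _ = ((n * a : ℝ) : ℂ) + ((∑ j, (u j - (a : ℂ)) / s j) + ∑ j, (v j - (a : ℂ)) / t j) := by
          rw [h3]
  have hre : w.re = n * a + E.re := by
    rw [hwE, Complex.add_re, Complex.ofReal_re]
  have hEbound : ‖E‖ ≤ d * ∑ j, (1 + b) / Real.sqrt (q j) := by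
    have hb1 : (0 : ℝ) ≤ 1 + b := by linarith
    have step1 : ‖E‖ ≤
        (∑ j, ‖(u j - (a : ℂ)) / s j‖) + ∑ j, ‖(v j - (a : ℂ)) / t j‖ := by
      refine (norm_add_le _ _).trans (add_le_add ?_ ?_) <;>
        exact norm_sum_le _ _
    have step2 : ∀ j : Fin n, ‖(u j - (a : ℂ)) / s j‖ ≤ d / Real.sqrt (q j) := by
      intro j
      rw [norm_div, habs_s j]
      exact (div_le_div_iff_of_pos_right (Real.sqrt_pos.mpr (hqpos j))).mpr (hu j)
    have step3 : ∀ j : Fin n,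
        ‖(v j - (a : ℂ)) / t j‖ ≤ d / (b⁻¹ * Real.sqrt (q j)) := by
      intro j
      rw [norm_div, habs_t j]
      exact (div_le_div_iff_of_pos_right (mul_pos (inv_pos.mpr hb) (Real.sqrt_pos.mpr (hqpos j)))).mpr (hv j)
    calc ‖E‖ ≤ _ := step1
      _ ≤ (∑ j, d / Real.sqrt (q j)) + ∑ j, d / (b⁻¹ * Real.sqrt (q j)) :=
          add_le_add (Finset.sum_le_sum fun j _ => step2 j) (Finset.sum_le_sum fun j _ => step3 j)
      _ = d * ∑ j, (1 + b) / Real.sqrt (q j) := by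
          rw [Finset.mul_sum, ← Finset.sum_add_distrib]
          refine Finset.sum_congr rfl fun j _ => ?_
          have hq' : Real.sqrt (q j) ≠ 0 := (Real.sqrt_pos.mpr (hqpos j)).ne'
          field_simp
  have hSeq : (∑ j, (1 + b) / Real.sqrt (1 + 2 * b * Real.cos (α j) + b ^ 2))
      = ∑ j, (1 + b) / Real.sqrt (q j) := rfl
  rw [hSeq]
  have habsE : |E.re| ≤ d * ∑ j, (1 + b) / Real.sqrt (q j) :=
    (Complex.abs_re_le_norm E).trans hEbound
  obtain ⟨hl, hr⟩ := abs_le.mp habsE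
  constructor <;> linarith
end

section
/- Let ρ ∈ (0, 1], let n ≥ 1, let b ∈ (0,∞), let α_1, …, α_n ∈ [0, π), and set S = Σ_{j=1}^n sec(α_j/2) (note S ≥ n). Let f_1, …, f_n and g_1, …, g_n be analytic on the disk {z : |z| < ρ} with f_j′(0) = 1 = g_j′(0) and Re f_j′(z) > 0 and Re g_j′(z) > 0 for all |z| < ρ and all j. Define F = Σ_{j=1}^n f_j/(1 + b e^{iα_j}) + Σ_{j=1}^n g_j/(1 + b^{-1} e^{-iα_j}). Then Re F′(z) > 0 for all |z| < R, and consequently F is injective on the open disk {z : |z| < R}, where R = (ρ/n) ( S − √(S² − n²) ). -/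
open Real Finset

section Helpers
open Metric

lemma coeff_facts (b : ℝ) (hb : 0 < b) (a : ℝ) (ha : a ∈ Set.Ico (0:ℝ) π) :
    (1 / (1 + (b:ℂ) * Complex.exp (Complex.I * a)) +
      1 / (1 + (b:ℂ)⁻¹ * Complex.exp (-(Complex.I * a))) = 1) ∧
    ‖1 / (1 + (b:ℂ) * Complex.exp (Complex.I * a))‖ +
      ‖1 / (1 + (b:ℂ)⁻¹ * Complex.exp (-(Complex.I * a)))‖ ≤
        1 / Real.cos (a / 2) := by
  obtain ⟨ha0, haπ⟩ := ha
  set A : ℂ := 1 + (b:ℂ) * Complex.exp (Complex.I * a) with hAdef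
  set A' : ℂ := 1 + (b:ℂ)⁻¹ * Complex.exp (-(Complex.I * a)) with hA'def
  have hbne : (b:ℂ) ≠ 0 := Complex.ofReal_ne_zero.2 hb.ne'
  have hexp : Complex.exp (Complex.I * a) = Complex.cos a + Complex.sin a * Complex.I := by
    rw [mul_comm, Complex.exp_mul_I]
  have hre : A.re = 1 + b * Real.cos a := by
    simp [hAdef, hexp, Complex.cos_ofReal_re, Complex.sin_ofReal_im]
  have him : A.im = b * Real.sin a := by
    simp [hAdef, hexp, Complex.sin_ofReal_re]
  have hA0 : A ≠ 0 := by
    intro h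
    have him0 : b * Real.sin a = 0 := by rw [← him, h]; simp
    have hsin : Real.sin a = 0 := by
      rcases mul_eq_zero.1 him0 with h' | h'
      · exact absurd h' hb.ne'
      · exact h'
    rcases eq_or_lt_of_le ha0 with h0 | h0
    · have : A.re = 1 + b := by rw [hre, ← h0]; simp
      have : (0:ℝ) = 1 + b := by rw [← this, h]; simp
      linarith
    · exact absurd hsin (Real.sin_pos_of_pos_of_lt_pi h0 haπ).ne'
  have hcos : 0 < Real.cos (a / 2) := by
    apply Real.cos_pos_of_mem_Ioo
    constructor <;> [linarith [Real.pi_pos]; linarith]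
  have hsq : (Real.cos (a/2) * (1 + b))^2 ≤ (‖A‖)^2 := by
    rw [Complex.sq_norm, Complex.normSq_apply, hre, him]
    have h1 : Real.sin a ^ 2 + Real.cos a ^ 2 = 1 := Real.sin_sq_add_cos_sq a
    have h2 : Real.cos a = 2 * Real.cos (a/2) ^ 2 - 1 := by
      have := Real.cos_two_mul (a/2)
      rw [show 2 * (a/2) = a by ring] at this
      linarith
    have h3 : Real.cos (a/2) ^ 2 ≤ 1 := by
      nlinarith [Real.neg_one_le_cos a]
    nlinarith [sq_nonneg (1 - b)]
  have habsA : Real.cos (a/2) * (1 + b) ≤ ‖A‖ := by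
    have h1 : 0 ≤ Real.cos (a/2) * (1 + b) := by positivity
    nlinarith [norm_nonneg A]
  have hA'A : A' * ((b:ℂ) * Complex.exp (Complex.I * a)) = A := by
    rw [hA'def, hAdef, Complex.exp_neg]
    field_simp [Complex.exp_ne_zero]
    ring
  have hbe : (b:ℂ) * Complex.exp (Complex.I * a) ≠ 0 :=
    mul_ne_zero hbne (Complex.exp_ne_zero _)
  have hA'0 : A' ≠ 0 := by
    intro h; rw [h, zero_mul] at hA'A; exact hA0 hA'A.symm
  have hinv : 1 / A' = (b:ℂ) * Complex.exp (Complex.I * a) / A := by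
    rw [← hA'A]; field_simp
  have habse : ‖Complex.exp (Complex.I * a)‖ = 1 := by
    rw [Complex.norm_exp]; simp
  constructor
  · rw [hinv, ← add_div]
    rw [show (1:ℂ) + (b:ℂ) * Complex.exp (Complex.I * a) = A from hAdef.symm]
    exact div_self hA0
  · rw [hinv]
    have hAbpos : 0 < ‖A‖ := norm_pos_iff.mpr hA0
    have e1 : ‖1 / A‖ = 1 / ‖A‖ := by
      simp [map_div₀]
    have e2 : ‖(b:ℂ) * Complex.exp (Complex.I * a) / A‖ = b / ‖A‖ := by
      rw [norm_div, norm_mul, habse, Complex.norm_real, Real.norm_eq_abs, abs_of_pos hb, mul_one]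
    rw [e1, e2, ← add_div, div_le_div_iff₀ hAbpos hcos]
    nlinarith [habsA]

lemma cara {ρ : ℝ} (hρ : 0 < ρ) {p : ℂ → ℂ} (hd : DifferentiableOn ℂ p (ball 0 ρ))
    (hp0 : p 0 = 1) (hre : ∀ w ∈ ball (0:ℂ) ρ, 0 < (p w).re)
    {z : ℂ} (hz : ‖z‖ < ρ) :
    ‖(1 - ((‖z‖ / ρ : ℝ) : ℂ)^2) * p z
        - (1 + ((‖z‖ / ρ : ℝ) : ℂ)^2)‖ ≤ 2 * (‖z‖ / ρ) := by
  set r : ℝ := ‖z‖ / ρ with hrdef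
  have hr0 : 0 ≤ r := div_nonneg (norm_nonneg z) hρ.le
  have hr1 : r < 1 := (div_lt_one hρ).2 hz
  have hzball : z ∈ ball (0:ℂ) ρ := by
    simpa [Complex.dist_eq] using hz
  have h0ball : (0:ℂ) ∈ ball (0:ℂ) ρ := by simpa using hρ
  have hne : ∀ w ∈ ball (0:ℂ) ρ, p w + 1 ≠ 0 := by
    intro w hw h
    have := congrArg Complex.re h
    simp at this
    linarith [hre w hw]
  set q : ℂ → ℂ := fun w => (p w - 1) / (p w + 1) with hqdef
  have hqd : DifferentiableOn ℂ q (ball 0 ρ) :=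
    (hd.sub (differentiableOn_const 1)).div (hd.add (differentiableOn_const 1)) hne
  have hq0 : q 0 = 0 := by simp [hqdef, hp0]
  have hmaps : Set.MapsTo q (ball (0:ℂ) ρ) (ball (q 0) 1) := by
    intro w hw
    rw [hq0, mem_ball, Complex.dist_eq, sub_zero, hqdef]
    have hpw := hre w hw
    have hplus : ‖p w + 1‖ > 0 := norm_pos_iff.mpr (hne w hw)
    have hsq : (‖p w - 1‖)^2 < (‖p w + 1‖)^2 := by
      rw [Complex.sq_norm, Complex.sq_norm, Complex.normSq_apply, Complex.normSq_apply]
      simp only [Complex.sub_re, Complex.sub_im, Complex.add_re, Complex.add_im,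
        Complex.one_re, Complex.one_im]
      nlinarith
    have habs : ‖p w - 1‖ < ‖p w + 1‖ :=
      lt_of_pow_lt_pow_left₀ 2 (norm_nonneg _) hsq
    rw [norm_div]
    exact (div_lt_one hplus).2 habs
  have hQ : ‖q z‖ ≤ r := by
    have := Complex.dist_le_div_mul_dist_of_mapsTo_ball hqd (hmaps.mono_right ball_subset_closedBall) hzball
    rw [hq0, Complex.dist_eq, Complex.dist_eq, sub_zero, sub_zero] at this
    calc ‖q z‖ ≤ 1 / ρ * ‖z‖ := this
    _ = r := by rw [hrdef]; ring
  set Q : ℂ := q z with hQdef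
  have hP : p z + 1 ≠ 0 := hne z hzball
  have hQP : Q * (p z + 1) = p z - 1 := by
    rw [hQdef, hqdef]; field_simp
  have h1Q : (1:ℂ) - Q ≠ 0 := by
    intro h
    have hQ1 : Q = 1 := by linear_combination -h
    rw [hQ1, one_mul] at hQP
    have : (1:ℂ) = -1 := by linear_combination hQP
    norm_num at this
  have hiden : (1 - ((r:ℝ):ℂ)^2) * p z - (1 + ((r:ℝ):ℂ)^2)
      = 2 * (Q - ((r:ℝ):ℂ)^2) / (1 - Q) := by
    have hPform : p z * (1 - Q) = 1 + Q := by linear_combination -hQP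
    field_simp
    linear_combination (1 - ((r:ℝ):ℂ)^2) * hPform
  have hkey : ‖Q - ((r:ℝ):ℂ)^2‖ ≤ r * ‖1 - Q‖ := by
    have hQ2 : Q.re^2 + Q.im^2 ≤ r^2 := by
      have h2 : (‖Q‖)^2 ≤ r^2 := by nlinarith [norm_nonneg Q, hQ]
      rw [Complex.sq_norm, Complex.normSq_apply] at h2
      nlinarith [h2]
    have h2 : (‖Q - ((r:ℝ):ℂ)^2‖)^2 ≤ (r * ‖1 - Q‖)^2 := by
      rw [mul_pow, Complex.sq_norm, Complex.sq_norm, Complex.normSq_apply, Complex.normSq_apply]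
      simp only [← Complex.ofReal_pow, Complex.sub_re, Complex.sub_im, Complex.one_re,
        Complex.one_im, Complex.ofReal_re, Complex.ofReal_im]
      nlinarith [mul_nonneg (by nlinarith [hr0, hr1] : (0:ℝ) ≤ 1 - r^2)
        (by linarith : (0:ℝ) ≤ r^2 - (Q.re^2 + Q.im^2))]
    nlinarith [norm_nonneg (Q - ((r:ℝ):ℂ)^2),
      mul_nonneg hr0 (norm_nonneg (1 - Q)), h2]
  rw [hiden, norm_div, norm_mul]
  have h1Qpos : 0 < ‖1 - Q‖ := norm_pos_iff.mpr h1Q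
  rw [div_le_iff₀ h1Qpos]
  have : ‖(2:ℂ)‖ = 2 := by norm_num
  rw [this]
  nlinarith [hkey]

lemma term_bound {r : ℝ} (hr0 : 0 ≤ r) (hr1 : r < 1) {c P : ℂ}
    (hP : ‖(1 - ((r:ℝ):ℂ)^2) * P - (1 + ((r:ℝ):ℂ)^2)‖ ≤ 2 * r) :
    c.re * ((1 + r^2)/(1 - r^2)) - ‖c‖ * (2*r/(1 - r^2)) ≤ (c * P).re := by
  have h1 : 0 < 1 - r^2 := by nlinarith
  set X : ℂ := (1 - ((r:ℝ):ℂ)^2) * P - (1 + ((r:ℝ):ℂ)^2) with hXdef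
  have hcast : ((1 - r^2 : ℝ) : ℂ) ≠ 0 := Complex.ofReal_ne_zero.2 h1.ne'
  have hiden : c * P = (c * X + c * ((1 + r^2 : ℝ) : ℂ)) / ((1 - r^2 : ℝ) : ℂ) := by
    rw [eq_div_iff hcast, hXdef]
    push_cast
    ring
  have hc2 : (c * ((1 + r^2 : ℝ) : ℂ)).re = c.re * (1 + r^2) := by
    simp [Complex.mul_re, ← Complex.ofReal_pow, Complex.ofReal_re, Complex.ofReal_im]
  have hre : (c * P).re = ((c * X).re + c.re * (1 + r^2)) / (1 - r^2) := by
    rw [hiden, Complex.div_ofReal_re, Complex.add_re, hc2]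
  rw [hre]
  have hlow : -(‖c‖ * (2*r)) ≤ (c * X).re := by
    have h2 : |(c * X).re| ≤ ‖c * X‖ := Complex.abs_re_le_norm _
    have h3 : ‖c * X‖ ≤ ‖c‖ * (2 * r) := by
      rw [norm_mul]
      exact mul_le_mul_of_nonneg_left hP (norm_nonneg c)
    linarith [neg_abs_le ((c * X).re)]
  have hL : c.re * ((1 + r^2)/(1 - r^2)) - ‖c‖ * (2*r/(1 - r^2))
      = (c.re * (1+r^2) - ‖c‖ * (2*r)) / (1 - r^2) := by
    field_simp
  rw [hL, div_le_div_iff_of_pos_right h1]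
  linarith

end Helpers

set_option maxHeartbeats 1000000 in
/-- radius of univalence for general combinations of functions whose
derivatives have positive real part on `{|z| < ρ}` and equal `1` at the origin. -/
theorem stmt_7 (ρ : ℝ) (hρ : ρ ∈ Set.Ioc (0 : ℝ) 1) (n : ℕ) (hn : 1 ≤ n)
    (b : ℝ) (hb : 0 < b)
    (α : Fin n → ℝ) (hα : ∀ j, α j ∈ Set.Ico (0 : ℝ) π)
    (S : ℝ) (hS : S = ∑ j, 1 / Real.cos (α j / 2))
    (f g : Fin n → ℂ → ℂ)
    (hf : ∀ j, DifferentiableOn ℂ (f j) (Metric.ball 0 ρ))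
    (hg : ∀ j, DifferentiableOn ℂ (g j) (Metric.ball 0 ρ))
    (hf0 : ∀ j, deriv (f j) 0 = 1) (hg0 : ∀ j, deriv (g j) 0 = 1)
    (hfre : ∀ j, ∀ z ∈ Metric.ball (0 : ℂ) ρ, 0 < (deriv (f j) z).re)
    (hgre : ∀ j, ∀ z ∈ Metric.ball (0 : ℂ) ρ, 0 < (deriv (g j) z).re)
    (F : ℂ → ℂ)
    (hF : F = fun z => ∑ j, f j z / (1 + (b : ℂ) * Complex.exp (Complex.I * (α j : ℂ)))
            + ∑ j, g j z / (1 + (b : ℂ)⁻¹ * Complex.exp (-(Complex.I * (α j : ℂ)))))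
    (R : ℝ) (hR : R = (ρ / n) * (S - Real.sqrt (S ^ 2 - n ^ 2))) :
    (∀ z : ℂ, ‖z‖ < R → 0 < (deriv F z).re) ∧
      Set.InjOn F (Metric.ball 0 R) := by
  obtain ⟨hρ0, hρ1⟩ := hρ
  set A : Fin n → ℂ := fun j => 1 + (b : ℂ) * Complex.exp (Complex.I * (α j : ℂ)) with hAdef
  set A' : Fin n → ℂ := fun j => 1 + (b : ℂ)⁻¹ * Complex.exp (-(Complex.I * (α j : ℂ)))
    with hA'def
  have hn0 : (0:ℝ) < n := by exact_mod_cast hn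
  -- S ≥ n
  have hSn : (n:ℝ) ≤ S := by
    rw [hS]
    calc (n:ℝ) = ∑ _j : Fin n, (1:ℝ) := by simp
    _ ≤ ∑ j, 1 / Real.cos (α j / 2) := by
        apply Finset.sum_le_sum
        intro j _
        obtain ⟨h0, hπ⟩ := hα j
        have hc : 0 < Real.cos (α j / 2) := by
          apply Real.cos_pos_of_mem_Ioo
          constructor <;> [linarith [Real.pi_pos]; linarith]
        rw [le_div_iff₀ hc, one_mul]
        exact Real.cos_le_one _
  set t : ℝ := Real.sqrt (S^2 - n^2) with htdef
  have ht0 : 0 ≤ t := Real.sqrt_nonneg _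
  have ht2 : t^2 = S^2 - n^2 := Real.sq_sqrt (by nlinarith)
  have htS : S - n ≤ t := by nlinarith
  clear_value t
  have hRρ : R ≤ ρ := by
    rw [hR]
    have h1 : S - t ≤ n := by linarith
    calc ρ / n * (S - t) ≤ ρ / n * n := by
          apply mul_le_mul_of_nonneg_left h1 (by positivity)
    _ = ρ := by field_simp
  -- derivative of F
  have hderiv : ∀ z ∈ Metric.ball (0:ℂ) ρ,
      HasDerivAt F (∑ j, deriv (f j) z / A j + ∑ j, deriv (g j) z / A' j) z := by
    intro z hz
    rw [hF]
    apply HasDerivAt.add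
    · apply HasDerivAt.fun_sum
      intro j _
      exact (((hf j).differentiableAt (Metric.isOpen_ball.mem_nhds hz)).hasDerivAt).div_const _
    · apply HasDerivAt.fun_sum
      intro j _
      exact (((hg j).differentiableAt (Metric.isOpen_ball.mem_nhds hz)).hasDerivAt).div_const _
  -- part 1
  have part1 : ∀ z : ℂ, ‖z‖ < R → 0 < (deriv F z).re := by
    intro z hzR
    have hzρ : ‖z‖ < ρ := lt_of_lt_of_le hzR hRρ
    have hzball : z ∈ Metric.ball (0:ℂ) ρ := by simpa [Complex.dist_eq] using hzρ
    set r : ℝ := ‖z‖ / ρ with hrdef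
    have hr0 : 0 ≤ r := div_nonneg (norm_nonneg z) hρ0.le
    have hr1 : r < 1 := (div_lt_one hρ0).2 hzρ
    clear_value r
    have h1r : 0 < 1 - r^2 := by nlinarith
    set C : ℝ := (1 + r^2)/(1 - r^2) with hCdef
    set E : ℝ := 2*r/(1 - r^2) with hEdef
    have hE0 : 0 ≤ E := by positivity
    have hDeq : deriv F z = ∑ j, deriv (f j) z / A j + ∑ j, deriv (g j) z / A' j :=
      (hderiv z hzball).deriv
    have hreD : (deriv F z).re
        = ∑ j, ((deriv (f j) z / A j).re + (deriv (g j) z / A' j).re) := by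
      rw [hDeq, Complex.add_re, Complex.re_sum, Complex.re_sum, ← Finset.sum_add_distrib]
    have hterm : ∀ j, C - E * (1 / Real.cos (α j / 2))
        ≤ (deriv (f j) z / A j).re + (deriv (g j) z / A' j).re := by
      intro j
      have hcf := coeff_facts b hb (α j) (hα j)
      have hfan : DifferentiableOn ℂ (deriv (f j)) (Metric.ball 0 ρ) :=
        (((hf j).analyticOnNhd Metric.isOpen_ball).deriv).differentiableOn
      have hgan : DifferentiableOn ℂ (deriv (g j)) (Metric.ball 0 ρ) :=
        (((hg j).analyticOnNhd Metric.isOpen_ball).deriv).differentiableOn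
      have hcaraf := cara hρ0 hfan (hf0 j) (hfre j) hzρ
      have hcarag := cara hρ0 hgan (hg0 j) (hgre j) hzρ
      rw [← hrdef] at hcaraf hcarag
      have h1 := term_bound hr0 hr1 (c := 1 / A j) hcaraf
      have h2 := term_bound hr0 hr1 (c := 1 / A' j) hcarag
      have e1 : deriv (f j) z / A j = 1 / A j * deriv (f j) z := by ring
      have e2 : deriv (g j) z / A' j = 1 / A' j * deriv (g j) z := by ring
      rw [e1, e2]
      have hresum : (1 / A j).re + (1 / A' j).re = 1 := by
        have h := congrArg Complex.re hcf.1
        rw [Complex.add_re, Complex.one_re] at h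
        exact h
      have hxy : (1 / A j).re * C + (1 / A' j).re * C = C := by
        rw [← add_mul, hresum, one_mul]
      have habs : E * (‖1 / A j‖ + ‖1 / A' j‖)
          ≤ E * (1 / Real.cos (α j / 2)) := mul_le_mul_of_nonneg_left hcf.2 hE0
      rw [← hCdef, ← hEdef] at h1 h2
      linarith [h1, h2, hxy, habs]
    have hsumeq : ∑ j : Fin n, (C - E * (1 / Real.cos (α j / 2))) = n * C - E * S := by
      rw [Finset.sum_sub_distrib, Finset.sum_const, Finset.card_univ, Fintype.card_fin,
        ← Finset.mul_sum, hS, nsmul_eq_mul]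
    have hsum : (n:ℝ) * C - E * S ≤ (deriv F z).re := by
      rw [hreD, ← hsumeq]
      exact Finset.sum_le_sum fun j _ => hterm j
    -- numeric positivity
    have hnr : (n:ℝ) * r < S - t := by
      have h := hzR
      rw [hR, div_mul_eq_mul_div, lt_div_iff₀ hn0] at h
      have hrρ : r * ρ = ‖z‖ := by rw [hrdef]; exact div_mul_cancel₀ _ hρ0.ne'
      nlinarith [h, hρ0]
    have hf1 : 0 < S - t - n*r := by linarith
    have hf2 : 0 < S + t - n*r := by linarith
    have hnum : 0 < (n:ℝ) * (1 + r^2) - 2*S*r := by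
      nlinarith [mul_pos hf1 hf2, hn0, ht2]
    have hpos : 0 < (n:ℝ) * C - E * S := by
      rw [hCdef, hEdef]
      have : (n:ℝ) * ((1 + r^2)/(1 - r^2)) - 2*r/(1 - r^2) * S
          = ((n:ℝ) * (1 + r^2) - 2*S*r) / (1 - r^2) := by ring
      rw [this]
      positivity
    linarith
  refine ⟨part1, ?_⟩
  -- injectivity
  intro z₁ h₁ z₂ h₂ hEq
  by_contra hne
  have hsub : Metric.ball (0:ℂ) R ⊆ Metric.ball (0:ℂ) ρ := Metric.ball_subset_ball hRρ
  set w : ℂ := z₂ - z₁ with hw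
  have hw0 : w ≠ 0 := sub_ne_zero.2 (Ne.symm hne)
  set φ : ℝ → ℝ := fun s => ((starRingEnd ℂ) w * F (z₁ + (s:ℂ) * w)).re with hφdef
  have hmem : ∀ s ∈ Set.Icc (0:ℝ) 1, z₁ + (s:ℂ) * w ∈ Metric.ball (0:ℂ) R := by
    intro s hs
    have hc := (convex_ball (0:ℂ) R) h₁ h₂ (by linarith [hs.2] : (0:ℝ) ≤ 1 - s) hs.1
      (by ring : (1 - s) + s = 1)
    have heq : (1 - s) • z₁ + s • z₂ = z₁ + (s:ℂ) * w := by
      rw [hw]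
      simp only [Complex.real_smul]
      push_cast
      ring
    rwa [heq] at hc
  have hφd : ∀ s ∈ Set.Icc (0:ℝ) 1,
      HasDerivAt φ (Complex.normSq w * (deriv F (z₁ + (s:ℂ) * w)).re) s := by
    intro s hs
    have hmemρ : z₁ + (s:ℂ) * w ∈ Metric.ball (0:ℂ) ρ := hsub (hmem s hs)
    have hγ : HasDerivAt (fun u : ℝ => z₁ + (u:ℂ) * w) w s := by
      have h0 : HasDerivAt (fun u : ℝ => (u:ℂ)) 1 s := Complex.ofRealCLM.hasDerivAt
      simpa using (h0.mul_const w).const_add z₁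
    have hFD : HasDerivAt F (deriv F (z₁ + (s:ℂ) * w)) (z₁ + (s:ℂ) * w) :=
      ((hderiv _ hmemρ).differentiableAt).hasDerivAt
    have hcomp : HasDerivAt (fun u : ℝ => F (z₁ + (u:ℂ) * w))
        (deriv F (z₁ + (s:ℂ) * w) * w) s := by
      have := HasDerivAt.scomp (h := fun u : ℝ => z₁ + (u:ℂ) * w) s hFD hγ
      simpa [smul_eq_mul, mul_comm, Function.comp_def] using this
    have h2 : HasDerivAt (fun u : ℝ => (starRingEnd ℂ) w * F (z₁ + (u:ℂ) * w))
        ((starRingEnd ℂ) w * (deriv F (z₁ + (s:ℂ) * w) * w)) s := hcomp.const_mul _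
    have h3 := Complex.reCLM.hasFDerivAt.comp_hasDerivAt s h2
    have hval : (Complex.reCLM : ℂ →L[ℝ] ℝ) ((starRingEnd ℂ) w * (deriv F (z₁ + (s:ℂ) * w) * w))
        = Complex.normSq w * (deriv F (z₁ + (s:ℂ) * w)).re := by
      have hid : (starRingEnd ℂ) w * (deriv F (z₁ + (s:ℂ) * w) * w)
          = ((Complex.normSq w : ℝ) : ℂ) * deriv F (z₁ + (s:ℂ) * w) := by
        rw [Complex.normSq_eq_conj_mul_self]
        ring
      rw [Complex.reCLM_apply, hid]
      simp [Complex.mul_re]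
    rw [hval] at h3
    exact h3
  have hmono : StrictMonoOn φ (Set.Icc 0 1) := by
    apply strictMonoOn_of_deriv_pos (convex_Icc 0 1)
    · intro s hs
      exact ((hφd s hs).continuousAt).continuousWithinAt
    · intro s hs
      rw [interior_Icc] at hs
      have hs' : s ∈ Set.Icc (0:ℝ) 1 := ⟨hs.1.le, hs.2.le⟩
      rw [(hφd s hs').deriv]
      apply mul_pos
      · exact Complex.normSq_pos.2 hw0
      · apply part1
        have := hmem s hs'
        simpa [Complex.dist_eq] using this
  have h01 : φ 0 < φ 1 := hmono (Set.left_mem_Icc.2 zero_le_one)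
    (Set.right_mem_Icc.2 zero_le_one) zero_lt_one
  have hφ0 : φ 0 = ((starRingEnd ℂ) w * F z₁).re := by
    simp [hφdef]
  have hφ1 : φ 1 = ((starRingEnd ℂ) w * F z₂).re := by
    have : z₁ + ((1:ℝ):ℂ) * w = z₂ := by rw [hw]; push_cast; ring
    rw [hφdef]
    simp only []
    rw [this]
  rw [hφ0, hφ1, hEq] at h01
  exact lt_irrefl _ h01
end

section
/- Let ρ ∈ (0, 1], let n ≥ 1, let b ∈ (0,∞), let α_1, …, α_n ∈ [0, π), and set S = Σ_{j=1}^n sec(α_j/2). Let f_1, …, f_n and g_1, …, g_n be analytic on the disk {z : |z| < ρ} with f_j′(0) = 1 = g_j′(0) and Re f_j′(z) > 0 and Re g_j′(z) > 0 for all |z| < ρ and all j, and define F = Σ_{j=1}^n f_j/(1 + b e^{iα_j}) + Σ_{j=1}^n g_j/(1 + b^{-1} e^{-iα_j}). Then for every z with |z| = r < ρ, Re F′(z) ≥ (n r² − 2 r ρ S + n ρ²)/(ρ² − r²). -/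
open Real Finset Metric

lemma disk_bound {ρ : ℝ} (hρ : 0 < ρ) {φ : ℂ → ℂ}
    (hd : DifferentiableOn ℂ φ (ball 0 ρ)) (h0 : φ 0 = 1)
    (hre : ∀ w ∈ ball (0:ℂ) ρ, 0 < (φ w).re) {z : ℂ} (hz : ‖z‖ < ρ) :
    ‖φ z - (((ρ^2 + ‖z‖^2) / (ρ^2 - ‖z‖^2) : ℝ) : ℂ)‖
      ≤ 2 * ‖z‖ * ρ / (ρ^2 - ‖z‖^2) := by
  set r := ‖z‖ with hr
  have hr0 : 0 ≤ r := hr ▸ norm_nonneg z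
  have hzball : z ∈ ball (0:ℂ) ρ := by
    simp only [Metric.mem_ball, Complex.dist_eq, sub_zero]
    rw [← hr]; exact hz
  clear_value r
  have hne : ∀ w ∈ ball (0:ℂ) ρ, 1 + φ w ≠ 0 := by
    intro w hw heq
    have h1 : ((1 : ℂ) + φ w).re = 1 + (φ w).re := by simp
    rw [heq] at h1
    simp at h1
    linarith [hre w hw]
  set ψ : ℂ → ℂ := fun w => (1 - φ w) / (1 + φ w) with hψ
  have hψd : DifferentiableOn ℂ ψ (ball 0 ρ) :=
    ((differentiableOn_const 1).sub hd).div ((differentiableOn_const 1).add hd) hne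
  have hψ0 : ψ 0 = 0 := by simp [hψ, h0]
  have hψlt : ∀ w ∈ ball (0:ℂ) ρ, ‖ψ w‖ < 1 := by
    intro w hw
    have hx := hre w hw
    have hsq : ‖1 - φ w‖ ^ 2 < ‖1 + φ w‖ ^ 2 := by
      rw [Complex.sq_norm, Complex.sq_norm, Complex.normSq_apply, Complex.normSq_apply]
      simp only [Complex.sub_re, Complex.sub_im, Complex.add_re, Complex.add_im,
        Complex.one_re, Complex.one_im]
      nlinarith [sq_nonneg ((φ w).im)]
    have hlt : ‖1 - φ w‖ < ‖1 + φ w‖ :=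
      lt_of_pow_lt_pow_left₀ 2 (norm_nonneg _) hsq
    have hpos : 0 < ‖1 + φ w‖ :=
      (norm_pos_iff.mpr (hne w hw))
    rw [hψ]
    simp only [norm_div]
    exact (div_lt_one hpos).2 hlt
  have hmaps : Set.MapsTo ψ (ball 0 ρ) (ball (ψ 0) 1) := by
    intro w hw
    rw [hψ0]
    simpa [Metric.mem_ball, Complex.dist_eq] using hψlt w hw
  have hschwarz := Complex.dist_le_div_mul_dist_of_mapsTo_ball hψd (hmaps.mono_right ball_subset_closedBall) hzball
  rw [hψ0] at hschwarz
  simp only [Complex.dist_eq, sub_zero] at hschwarz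
  set t := r / ρ with ht
  clear_value t
  have habsψ : ‖ψ z‖ ≤ t := by
    rw [ht, hr]
    calc ‖ψ z‖ ≤ 1 / ρ * ‖z‖ := hschwarz
    _ = ‖z‖ / ρ := by ring
  have ht0 : 0 ≤ t := ht ▸ div_nonneg hr0 hρ.le
  have ht1 : t < 1 := ht ▸ (div_lt_one hρ).2 hz
  have h1ψ : (1 : ℂ) + ψ z ≠ 0 := by
    intro h
    have : ψ z = -1 := by linear_combination h
    rw [this] at habsψ
    simp at habsψ
    linarith
  have hφrel : φ z * (1 + ψ z) = 1 - ψ z := by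
    have hA := hne z hzball
    rw [hψ]
    field_simp
    ring
  have ht2 : (1 : ℝ) - t^2 > 0 := by nlinarith
  have ht2c : ((1 : ℂ) - (t:ℂ)^2) ≠ 0 := by
    intro h
    have : ((1 - t^2 : ℝ) : ℂ) = 0 := by push_cast; linear_combination h
    rw [Complex.ofReal_eq_zero] at this
    linarith
  -- identity
  have hC : (((1+t^2)/(1-t^2) : ℝ) : ℂ) * ((1:ℂ) - (t:ℂ)^2) = 1 + (t:ℂ)^2 := by
    have hre' : ((1+t^2)/(1-t^2)) * (1 - t^2) = 1 + t^2 :=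
      div_mul_cancel₀ _ (ne_of_gt ht2)
    rw [show ((1:ℂ) - (t:ℂ)^2) = ((1 - t^2 : ℝ):ℂ) by push_cast; ring,
      ← Complex.ofReal_mul, hre']
    push_cast
    ring
  have hid : (φ z - (((1+t^2)/(1-t^2) : ℝ) : ℂ)) * (1 + ψ z) * ((1:ℂ) - (t:ℂ)^2)
      = -2*(ψ z + (t:ℂ)^2) := by
    linear_combination ((1:ℂ)-(t:ℂ)^2) * hφrel - (1 + ψ z) * hC
  -- key bound
  have hkey : ‖ψ z + (t:ℂ)^2‖ ≤ t * ‖1 + ψ z‖ := by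
    have hsq : ‖ψ z + (t:ℂ)^2‖ ^ 2 ≤ (t * ‖1 + ψ z‖)^2 := by
      rw [mul_pow, Complex.sq_norm, Complex.sq_norm, Complex.normSq_apply, Complex.normSq_apply]
      have hψsq : (ψ z).re^2 + (ψ z).im^2 ≤ t^2 := by
        have := habsψ
        have h2 : ‖ψ z‖ ^ 2 ≤ t^2 := by nlinarith [norm_nonneg (ψ z)]
        rw [Complex.sq_norm, Complex.normSq_apply] at h2
        nlinarith
      simp only [Complex.add_re, Complex.add_im, Complex.one_re, Complex.one_im]
      simp only [← Complex.ofReal_pow, Complex.ofReal_re, Complex.ofReal_im]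
      nlinarith [sq_nonneg ((ψ z).im)]
    exact le_of_pow_le_pow_left₀ two_ne_zero (mul_nonneg ht0 (norm_nonneg _)) hsq
  have habs_id := congrArg norm hid
  rw [norm_mul, norm_mul] at habs_id
  have h2abs : ‖-2*(ψ z + (t:ℂ)^2)‖ = 2 * ‖ψ z + (t:ℂ)^2‖ := by
    rw [norm_mul]; norm_num
  have htabs : ‖(1:ℂ) - (t:ℂ)^2‖ = 1 - t^2 := by
    have : ((1:ℂ) - (t:ℂ)^2) = ((1 - t^2 : ℝ) : ℂ) := by push_cast; ring
    rw [this, Complex.norm_real, Real.norm_eq_abs, abs_of_pos ht2]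
  rw [h2abs, htabs] at habs_id
  have hψpos : 0 < ‖1 + ψ z‖ := norm_pos_iff.mpr h1ψ
  have hfin : ‖φ z - (((1+t^2)/(1-t^2) : ℝ) : ℂ)‖ * (1 - t^2) ≤ 2 * t := by
    have h3 : ‖φ z - (((1+t^2)/(1-t^2) : ℝ) : ℂ)‖ * ‖1 + ψ z‖ * (1 - t^2)
        ≤ 2 * t * ‖1 + ψ z‖ := by
      rw [habs_id]; nlinarith [hkey]
    nlinarith
  -- convert
  have hcradius : 2 * t / (1 - t^2) = 2 * r * ρ / (ρ^2 - r^2) := by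
    rw [ht]
    have hρr : ρ^2 - r^2 ≠ 0 := by nlinarith
    field_simp
  have hcenter : ((1+t^2)/(1-t^2) : ℝ) = (ρ^2 + r^2) / (ρ^2 - r^2) := by
    rw [ht]
    have hρr : ρ^2 - r^2 ≠ 0 := by nlinarith
    field_simp
  rw [← hcenter, ← hcradius]
  rw [le_div_iff₀ ht2]
  exact hfin
open Metric Real

lemma coeff_bound {α b : ℝ} (hb : 0 < b) (hα : α ∈ Set.Ico (0:ℝ) π) :
    (1 + b) * Real.cos (α/2) ≤ ‖1 + (b:ℂ) * Complex.exp (Complex.I * (α:ℂ))‖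
    ∧ 0 < Real.cos (α/2) := by
  have hcos : 0 < Real.cos (α/2) := by
    apply Real.cos_pos_of_mem_Ioo
    constructor
    · linarith [hα.1, Real.pi_pos]
    · linarith [hα.2]
  refine ⟨?_, hcos⟩
  have hre : ((1:ℂ) + (b:ℂ) * Complex.exp (Complex.I * (α:ℂ))).re = 1 + b * Real.cos α := by
    rw [mul_comm Complex.I, Complex.exp_mul_I]
    simp [Complex.cos_ofReal_re, Complex.sin_ofReal_re]
  have him : ((1:ℂ) + (b:ℂ) * Complex.exp (Complex.I * (α:ℂ))).im = b * Real.sin α := by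
    rw [mul_comm Complex.I, Complex.exp_mul_I]
    simp [Complex.cos_ofReal_im, Complex.sin_ofReal_re]
  have hca : Real.cos α = 2 * Real.cos (α/2)^2 - 1 := by
    have := Real.cos_sq (α/2)
    rw [show 2 * (α/2) = α by ring] at this
    linarith
  have hsq : ((1 + b) * Real.cos (α/2))^2
      ≤ ‖1 + (b:ℂ) * Complex.exp (Complex.I * (α:ℂ))‖^2 := by
    rw [Complex.sq_norm, Complex.normSq_apply, hre, him]
    have hpyth : Real.sin α ^2 + Real.cos α ^2 = 1 := Real.sin_sq_add_cos_sq α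
    have hc1 : Real.cos (α/2) ≤ 1 := Real.cos_le_one _
    have hc2 : Real.cos (α/2)^2 ≤ 1 := by nlinarith
    nlinarith [mul_nonneg (sq_nonneg (1-b)) (by linarith : (0:ℝ) ≤ 1 - Real.cos (α/2)^2)]
  exact le_of_pow_le_pow_left₀ two_ne_zero (norm_nonneg _) hsq

lemma term_bound_s8 {u v c d : ℂ} {A B s : ℝ} (hB : 0 ≤ B)
    (hu : ‖u - (A:ℂ)‖ ≤ B) (hv : ‖v - (A:ℂ)‖ ≤ B)
    (hcd : c + d = 1) (habs : ‖c‖ + ‖d‖ ≤ s) :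
    A - B * s ≤ (u * c).re + (v * d).re := by
  have h1 : (u * c).re + (v * d).re = A + ((u - A) * c).re + ((v - A) * d).re := by
    have : (u*c) + (v*d) = (A:ℂ)*(c+d) + (u - A)*c + (v - A)*d := by ring
    rw [hcd, mul_one] at this
    have := congrArg Complex.re this
    simp only [Complex.add_re, Complex.ofReal_re] at this
    linarith
  have h2 : ∀ (w e : ℂ), ‖w‖ ≤ B → -(B * ‖e‖) ≤ (w * e).re := by
    intro w e hw
    have h := Complex.abs_re_le_norm (w * e)
    rw [norm_mul] at h
    have h' := neg_abs_le ((w * e).re)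
    nlinarith [norm_nonneg e, norm_nonneg w]
  have hc := h2 (u - A) c hu
  have hd := h2 (v - A) d hv
  have hcn : 0 ≤ ‖c‖ := norm_nonneg c
  have hdn : 0 ≤ ‖d‖ := norm_nonneg d
  nlinarith

/-- quantitative lower bound `Re F′(z) ≥ (n r² − 2 r ρ S + n ρ²)/(ρ² − r²)`
for the general combination of functions with derivative of positive real part. -/
theorem stmt_8 (ρ : ℝ) (hρ : ρ ∈ Set.Ioc (0 : ℝ) 1) (n : ℕ) (hn : 1 ≤ n)
    (b : ℝ) (hb : 0 < b)
    (α : Fin n → ℝ) (hα : ∀ j, α j ∈ Set.Ico (0 : ℝ) π)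
    (S : ℝ) (hS : S = ∑ j, 1 / Real.cos (α j / 2))
    (f g : Fin n → ℂ → ℂ)
    (hf : ∀ j, DifferentiableOn ℂ (f j) (Metric.ball 0 ρ))
    (hg : ∀ j, DifferentiableOn ℂ (g j) (Metric.ball 0 ρ))
    (hf0 : ∀ j, deriv (f j) 0 = 1) (hg0 : ∀ j, deriv (g j) 0 = 1)
    (hfre : ∀ j, ∀ z ∈ Metric.ball (0 : ℂ) ρ, 0 < (deriv (f j) z).re)
    (hgre : ∀ j, ∀ z ∈ Metric.ball (0 : ℂ) ρ, 0 < (deriv (g j) z).re)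
    (F : ℂ → ℂ)
    (hF : F = fun z => ∑ j, f j z / (1 + (b : ℂ) * Complex.exp (Complex.I * (α j : ℂ)))
            + ∑ j, g j z / (1 + (b : ℂ)⁻¹ * Complex.exp (-(Complex.I * (α j : ℂ))))) :
    ∀ z : ℂ, ∀ r : ℝ, r = ‖z‖ → r < ρ →
      (n * r ^ 2 - 2 * r * ρ * S + n * ρ ^ 2) / (ρ ^ 2 - r ^ 2) ≤ (deriv F z).re := by
  intro z r hr hrρ
  have hρ0 : 0 < ρ := hρ.1
  have hr0 : 0 ≤ r := hr ▸ norm_nonneg z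
  have hzball : z ∈ Metric.ball (0:ℂ) ρ := by
    simp only [Metric.mem_ball, Complex.dist_eq, sub_zero]
    rw [← hr]; exact hrρ
  have hD : (0:ℝ) < ρ^2 - r^2 := by nlinarith
  have hB0 : (0:ℝ) ≤ 2*r*ρ/(ρ^2-r^2) := div_nonneg (by positivity) hD.le
  -- derivative bounds for f and g
  have hfb : ∀ j, ‖deriv (f j) z - (((ρ^2+r^2)/(ρ^2-r^2) : ℝ) : ℂ)‖
      ≤ 2*r*ρ/(ρ^2-r^2) := by
    intro j
    have hfa : DifferentiableOn ℂ (deriv (f j)) (Metric.ball 0 ρ) :=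
      (((hf j).analyticOnNhd Metric.isOpen_ball).deriv).differentiableOn
    have h := disk_bound hρ0 hfa (hf0 j) (hfre j) (show ‖z‖ < ρ from hr ▸ hrρ)
    rw [← hr] at h
    exact h
  have hgb : ∀ j, ‖deriv (g j) z - (((ρ^2+r^2)/(ρ^2-r^2) : ℝ) : ℂ)‖
      ≤ 2*r*ρ/(ρ^2-r^2) := by
    intro j
    have hga : DifferentiableOn ℂ (deriv (g j)) (Metric.ball 0 ρ) :=
      (((hg j).analyticOnNhd Metric.isOpen_ball).deriv).differentiableOn
    have h := disk_bound hρ0 hga (hg0 j) (hgre j) (show ‖z‖ < ρ from hr ▸ hrρ)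
    rw [← hr] at h
    exact h
  -- denominators
  set C : Fin n → ℂ := fun j => 1 + (b:ℂ) * Complex.exp (Complex.I * (α j : ℂ)) with hC
  set D : Fin n → ℂ := fun j => 1 + (b:ℂ)⁻¹ * Complex.exp (-(Complex.I * (α j : ℂ))) with hDdef
  have hcoeff := fun j => coeff_bound hb (hα j)
  have hCpos : ∀ j, 0 < ‖C j‖ := by
    intro j
    have h1 := (hcoeff j).1
    have h2 := (hcoeff j).2
    calc (0:ℝ) < (1+b) * Real.cos (α j / 2) := by positivity
    _ ≤ ‖C j‖ := h1
  have hCne : ∀ j, C j ≠ 0 := fun j => by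
    intro h
    have := hCpos j
    rw [h] at this
    simp at this
  have hbe : ∀ j, (b:ℂ) * Complex.exp (Complex.I * (α j : ℂ)) ≠ 0 := fun j =>
    mul_ne_zero (Complex.ofReal_ne_zero.2 hb.ne') (Complex.exp_ne_zero _)
  have hDmul : ∀ j, D j * ((b:ℂ) * Complex.exp (Complex.I * (α j : ℂ))) = C j := by
    intro j
    have hbne : (b:ℂ) ≠ 0 := Complex.ofReal_ne_zero.2 hb.ne'
    have hene : Complex.exp (Complex.I * (α j : ℂ)) ≠ 0 := Complex.exp_ne_zero _
    simp only [hDdef, hC, Complex.exp_neg]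
    field_simp
    ring
  have hDne : ∀ j, D j ≠ 0 := by
    intro j h
    apply hCne j
    rw [← hDmul j, h, zero_mul]
  have hdinv : ∀ j, (D j)⁻¹ = (b:ℂ) * Complex.exp (Complex.I * (α j : ℂ)) / C j := by
    intro j
    rw [eq_div_iff (hCne j), ← hDmul j, ← mul_assoc, inv_mul_cancel₀ (hDne j), one_mul]
  have hsumcd : ∀ j, (C j)⁻¹ + (D j)⁻¹ = 1 := by
    intro j
    rw [hdinv j]
    field_simp [hCne j]
    simp only [hC]
  have habse : ∀ j, ‖Complex.exp (Complex.I * (α j : ℂ))‖ = 1 := by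
    intro j
    rw [Complex.norm_exp]
    simp
  have habscd : ∀ j, ‖(C j)⁻¹‖ + ‖(D j)⁻¹‖ ≤ 1 / Real.cos (α j / 2) := by
    intro j
    rw [hdinv j, norm_inv, norm_div, norm_mul, habse j, Complex.norm_real, Real.norm_eq_abs, abs_of_pos hb, mul_one]
    have h1 := (hcoeff j).1
    have h2 := (hcoeff j).2
    have h3 := hCpos j
    have heq : (‖C j‖)⁻¹ + b / ‖C j‖ = (1+b)/‖C j‖ := by
      rw [inv_eq_one_div, ← add_div]
    rw [heq, div_le_div_iff₀ h3 h2]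
    nlinarith [h1]
  -- derivative of F
  have hfd : ∀ j : Fin n, HasDerivAt (f j) (deriv (f j) z) z := fun j =>
    ((hf j).differentiableAt (Metric.isOpen_ball.mem_nhds hzball)).hasDerivAt
  have hgd : ∀ j : Fin n, HasDerivAt (g j) (deriv (g j) z) z := fun j =>
    ((hg j).differentiableAt (Metric.isOpen_ball.mem_nhds hzball)).hasDerivAt
  have h1 : HasDerivAt (fun w => ∑ j, f j w / C j) (∑ j, deriv (f j) z / C j) z :=
    HasDerivAt.fun_sum fun j _ => (hfd j).div_const _
  have h2 : HasDerivAt (fun w => ∑ j, g j w / D j) (∑ j, deriv (g j) z / D j) z :=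
    HasDerivAt.fun_sum fun j _ => (hgd j).div_const _
  have hderiv : deriv F z = ∑ j, deriv (f j) z / C j + ∑ j, deriv (g j) z / D j := by
    rw [hF]
    exact (h1.add h2).deriv
  rw [hderiv, Complex.add_re, Complex.re_sum, Complex.re_sum, ← Finset.sum_add_distrib]
  have hterm : ∀ j : Fin n,
      (ρ^2+r^2)/(ρ^2-r^2) - (2*r*ρ/(ρ^2-r^2)) * (1 / Real.cos (α j / 2))
        ≤ (deriv (f j) z / C j).re + (deriv (g j) z / D j).re := by
    intro j
    rw [div_eq_mul_inv (deriv (f j) z), div_eq_mul_inv (deriv (g j) z)]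
    exact term_bound_s8 hB0 (hfb j) (hgb j) (hsumcd j) (habscd j)
  have hsum_le : ∑ j : Fin n, ((ρ^2+r^2)/(ρ^2-r^2) - (2*r*ρ/(ρ^2-r^2)) * (1 / Real.cos (α j / 2)))
      ≤ ∑ j, ((deriv (f j) z / C j).re + (deriv (g j) z / D j).re) :=
    Finset.sum_le_sum fun j _ => hterm j
  refine le_trans (le_of_eq ?_) hsum_le
  rw [Finset.sum_sub_distrib, Finset.sum_const, Finset.card_univ, Fintype.card_fin,
    ← Finset.mul_sum, ← hS, nsmul_eq_mul]
  have hDne' : ρ^2 - r^2 ≠ 0 := ne_of_gt hD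
  field_simp
  ring
end

section
/- Let p ∈ (0, 1), let n ≥ 1, let α_1, …, α_n ∈ [0, π), and set S = Σ_{j=1}^n sec(α_j/2). Define χ(r) = 1 + 2n r²/(1 − r²) − (2r/(1 − r²)) ( (p − r)/(1 − pr) + (1 − pr)/(p − r) ) · S for r ∈ [0, p), and let R be the smallest r ∈ (0, p) with χ(r) = 0 (such an r exists). Let F be analytic on {z : |z| < p} with F′(z) ≠ 0 there, and suppose that for every z with |z| = r < p there exist b ∈ (0,∞) and complex numbers u_1, …, u_n, v_1, …, v_n satisfying |u_j − 2r²/(1 − r²)| ≤ (2r/(1 − r²)) ( (p − r)/(1 − pr) + (1 − pr)/(p − r) ) and the same bound for each v_j, such that z F″(z)/F′(z) = Σ_{j=1}^n u_j/(1 + b e^{iα_j}) + Σ_{j=1}^n v_j/(1 + b^{-1} e^{-iα_j}). Then Re( 1 + z F″(z)/F′(z) ) > 0 for all z with |z| < R. -/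
open Real Finset

lemma cos_half_pos {α : ℝ} (hα : α ∈ Set.Ico (0:ℝ) π) : 0 < Real.cos (α/2) := by
  apply Real.cos_pos_of_mem_Ioo
  constructor
  · nlinarith [hα.1, Real.pi_pos]
  · nlinarith [hα.2]

lemma normSq_denom (b α : ℝ) :
    Complex.normSq (1 + (b:ℂ) * Complex.exp (Complex.I * α)) = 1 + 2*b*Real.cos α + b^2 := by
  rw [mul_comm Complex.I (α:ℂ), Complex.exp_mul_I]
  simp [Complex.normSq_apply, Complex.cos_ofReal_re, Complex.sin_ofReal_re]
  nlinarith [Real.sin_sq_add_cos_sq α]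

lemma denom_lower (b α : ℝ) (hα : α ∈ Set.Ico (0:ℝ) π) :
    (1 + b) * Real.cos (α/2) ≤ ‖1 + (b:ℂ) * Complex.exp (Complex.I * α)‖ := by
  have hcos := cos_half_pos hα
  apply le_of_pow_le_pow_left₀ two_ne_zero (norm_nonneg _)
  rw [Complex.sq_norm, normSq_denom]
  have h1 : Real.cos (α/2) ^ 2 = 1/2 + Real.cos α / 2 := by rw [Real.cos_sq]; ring_nf
  nlinarith [Real.cos_le_one α, sq_nonneg (1 - b)]

lemma term_bound_s9 (b α c A : ℝ) (hb : 0 < b) (hα : α ∈ Set.Ico (0:ℝ) π)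
    (u v : ℂ) (hu : ‖u - (c:ℂ)‖ ≤ A) (hv : ‖v - (c:ℂ)‖ ≤ A) :
    c - A / Real.cos (α/2) ≤ (u / (1 + (b:ℂ) * Complex.exp (Complex.I * α))
        + v / (1 + (b:ℂ)⁻¹ * Complex.exp (-(Complex.I * α)))).re := by
  have hcos := cos_half_pos hα
  have hlow := denom_lower b α hα
  set d : ℂ := 1 + (b:ℂ) * Complex.exp (Complex.I * α) with hd_def
  have hdpos : 0 < ‖d‖ := lt_of_lt_of_le (by positivity) hlow
  have hd : d ≠ 0 := fun h => by simp [h] at hdpos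
  have hbne : (b:ℂ) ≠ 0 := by exact_mod_cast hb.ne'
  have hene : Complex.exp (Complex.I * α) ≠ 0 := Complex.exp_ne_zero _
  have h2 : (1 + (b:ℂ)⁻¹ * Complex.exp (-(Complex.I * α)))
      = d / ((b:ℂ) * Complex.exp (Complex.I * α)) := by
    rw [hd_def, Complex.exp_neg]
    field_simp
    ring
  have hA : 0 ≤ A := le_trans (norm_nonneg _) hu
  have key : u / d + v / (1 + (b:ℂ)⁻¹ * Complex.exp (-(Complex.I * α)))
      = (c:ℂ) + ((u - c) * (1/d) + (v - c) * ((b:ℂ) * Complex.exp (Complex.I * α) / d)) := by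
    rw [h2, hd_def]
    field_simp [show (1:ℂ) + (b:ℂ) * Complex.exp (Complex.I * α) ≠ 0 from hd]
    ring
  rw [key, Complex.add_re, Complex.ofReal_re]
  have habs : ‖(u - c) * (1/d) + (v - c) * ((b:ℂ) * Complex.exp (Complex.I * α) / d)‖
      ≤ A / Real.cos (α/2) := by
    have he1 : ‖(b:ℂ) * Complex.exp (Complex.I * α)‖ = b := by
      simp [Complex.norm_exp, abs_of_pos hb]
    calc ‖(u - c) * (1/d) + (v - c) * ((b:ℂ) * Complex.exp (Complex.I * α) / d)‖
        ≤ ‖(u - c) * (1/d)‖ + ‖(v - c) * ((b:ℂ) * Complex.exp (Complex.I * α) / d)‖ := norm_add_le _ _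
      _ = ‖u - c‖ * (1 / ‖d‖) + ‖v - c‖ * (b / ‖d‖) := by
          simp [norm_mul, norm_div, he1, abs_of_pos hb]
      _ ≤ A * (1 / ‖d‖) + A * (b / ‖d‖) := by
          gcongr
      _ = A * ((1 + b) / ‖d‖) := by ring
      _ ≤ A * (1 / Real.cos (α/2)) := by
          gcongr A * ?_
          rw [div_le_div_iff₀ hdpos hcos]
          linarith [hlow]
      _ = A / Real.cos (α/2) := by ring
  have hre := Complex.abs_re_le_norm ((u - (c:ℂ)) * (1/d) + (v - (c:ℂ)) * ((b:ℂ) * Complex.exp (Complex.I * α) / d))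
  rw [abs_le] at hre
  linarith [hre.1]

/-- radius of convexity for functions whose logarithmic second-derivative
expression decomposes as a combination of terms satisfying the estimate valid for `S(p)`. -/
theorem stmt_9 (p : ℝ) (hp : p ∈ Set.Ioo (0 : ℝ) 1) (n : ℕ) (hn : 1 ≤ n)
    (α : Fin n → ℝ) (hα : ∀ j, α j ∈ Set.Ico (0 : ℝ) π)
    (S : ℝ) (hS : S = ∑ j, 1 / Real.cos (α j / 2))
    (χ : ℝ → ℝ)
    (hχ : ∀ r ∈ Set.Ico (0 : ℝ) p,
      χ r = 1 + 2 * n * r ^ 2 / (1 - r ^ 2)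
        - (2 * r / (1 - r ^ 2)) * ((p - r) / (1 - p * r) + (1 - p * r) / (p - r)) * S)
    (R : ℝ) (hR : R ∈ Set.Ioo (0 : ℝ) p) (hRzero : χ R = 0)
    (hRmin : ∀ r ∈ Set.Ioo (0 : ℝ) p, χ r = 0 → R ≤ r)
    (F : ℂ → ℂ) (hF : DifferentiableOn ℂ F (Metric.ball 0 p))
    (hF' : ∀ z ∈ Metric.ball (0 : ℂ) p, deriv F z ≠ 0)
    (hdec : ∀ z ∈ Metric.ball (0 : ℂ) p, ∀ r : ℝ, r = ‖z‖ →
      ∃ b : ℝ, 0 < b ∧ ∃ u v : Fin n → ℂ,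
        (∀ j, ‖u j - ((2 * r ^ 2 / (1 - r ^ 2) : ℝ) : ℂ)‖
            ≤ (2 * r / (1 - r ^ 2)) * ((p - r) / (1 - p * r) + (1 - p * r) / (p - r))) ∧
        (∀ j, ‖v j - ((2 * r ^ 2 / (1 - r ^ 2) : ℝ) : ℂ)‖
            ≤ (2 * r / (1 - r ^ 2)) * ((p - r) / (1 - p * r) + (1 - p * r) / (p - r))) ∧
        z * deriv (deriv F) z / deriv F z
          = ∑ j, u j / (1 + (b : ℂ) * Complex.exp (Complex.I * (α j : ℂ)))
            + ∑ j, v j / (1 + (b : ℂ)⁻¹ * Complex.exp (-(Complex.I * (α j : ℂ))))) :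
    ∀ z : ℂ, ‖z‖ < R →
      0 < (1 + z * deriv (deriv F) z / deriv F z).re := by
  intro z hz
  have hzp : z ∈ Metric.ball (0:ℂ) p := by
    rw [Metric.mem_ball, Complex.dist_eq, sub_zero]
    exact lt_trans hz hR.2
  obtain ⟨b, hb, u, v, hu, hv, heq⟩ := hdec z hzp (‖z‖) rfl
  set r : ℝ := ‖z‖ with hr
  have hr0 : (0:ℝ) ≤ r := norm_nonneg z
  have hrR : r < R := hz
  have hrp : r < p := lt_trans hrR hR.2
  have hχr := hχ r ⟨hr0, hrp⟩
  -- positivity of χ on [0, R)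
  have hχpos : 0 < χ r := by
    by_contra hcon
    push_neg at hcon
    set f : ℝ → ℝ := fun x => 1 + 2 * n * x ^ 2 / (1 - x ^ 2)
        - (2 * x / (1 - x ^ 2)) * ((p - x) / (1 - p * x) + (1 - p * x) / (p - x)) * S
      with hf_def
    have hmem : ∀ x ∈ Set.Icc (0:ℝ) r, (1 - x^2 ≠ 0 ∧ 1 - p*x ≠ 0 ∧ p - x ≠ 0) := by
      intro x hx
      have h1 : x < p := lt_of_le_of_lt hx.2 hrp
      have h2 := hp.1; have h3 := hp.2
      refine ⟨by nlinarith [hx.1], by nlinarith [hx.1], by nlinarith⟩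
    have hcont : ContinuousOn f (Set.Icc 0 r) := by
      apply ContinuousOn.sub
      · exact continuousOn_const.add ((continuousOn_const.mul (continuousOn_pow 2)).div
          (continuousOn_const.sub (continuousOn_pow 2)) (fun x hx => (hmem x hx).1))
      · exact (((continuousOn_const.mul continuousOn_id).div
            (continuousOn_const.sub (continuousOn_pow 2)) fun x hx => (hmem x hx).1).mul
          (((continuousOn_const.sub continuousOn_id).div
              (continuousOn_const.sub (continuousOn_const.mul continuousOn_id))
              fun x hx => (hmem x hx).2.1).add
           ((continuousOn_const.sub (continuousOn_const.mul continuousOn_id)).div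
              (continuousOn_const.sub continuousOn_id) fun x hx => (hmem x hx).2.2))).mul
          continuousOn_const
    have hf0 : f 0 = 1 := by simp [hf_def]
    have hfr : f r = χ r := hχr.symm
    obtain ⟨r0, hr0mem, hfr0⟩ := intermediate_value_Icc' hr0 hcont
      (⟨by rw [hfr]; exact hcon, by rw [hf0]; norm_num⟩ : (0:ℝ) ∈ Set.Icc (f r) (f 0))
    have hr0pos : 0 < r0 := by
      rcases lt_or_eq_of_le hr0mem.1 with h | h
      · exact h
      · exfalso; rw [← h, hf0] at hfr0; norm_num at hfr0
    have hr0p : r0 < p := lt_of_le_of_lt hr0mem.2 hrp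
    have hχ0 : χ r0 = 0 := by rw [hχ r0 ⟨le_of_lt hr0pos, hr0p⟩]; exact hfr0
    have := hRmin r0 ⟨hr0pos, hr0p⟩ hχ0
    linarith [hr0mem.2]
  -- the estimate
  rw [heq]
  have hre : (1 + (∑ j, u j / (1 + (b : ℂ) * Complex.exp (Complex.I * (α j : ℂ)))
      + ∑ j, v j / (1 + (b : ℂ)⁻¹ * Complex.exp (-(Complex.I * (α j : ℂ)))))).re
      = 1 + ∑ j, (u j / (1 + (b : ℂ) * Complex.exp (Complex.I * (α j : ℂ)))
          + v j / (1 + (b : ℂ)⁻¹ * Complex.exp (-(Complex.I * (α j : ℂ))))).re := by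
    rw [← Finset.sum_add_distrib]
    simp [Complex.add_re, Complex.re_sum]
  rw [hre]
  set c : ℝ := 2 * r ^ 2 / (1 - r ^ 2) with hc
  set A : ℝ := (2 * r / (1 - r ^ 2)) * ((p - r) / (1 - p * r) + (1 - p * r) / (p - r)) with hA
  have hterm : ∀ j : Fin n, (c - A / Real.cos (α j / 2))
      ≤ (u j / (1 + (b : ℂ) * Complex.exp (Complex.I * (α j : ℂ)))
          + v j / (1 + (b : ℂ)⁻¹ * Complex.exp (-(Complex.I * (α j : ℂ))))).re :=
    fun j => term_bound_s9 b (α j) c A hb (hα j) (u j) (v j) (hu j) (hv j)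
  have hsum : ∑ j, (c - A / Real.cos (α j / 2))
      ≤ ∑ j, (u j / (1 + (b : ℂ) * Complex.exp (Complex.I * (α j : ℂ)))
          + v j / (1 + (b : ℂ)⁻¹ * Complex.exp (-(Complex.I * (α j : ℂ))))).re :=
    Finset.sum_le_sum (fun j _ => hterm j)
  have hval : ∑ j, (c - A / Real.cos (α j / 2)) = n * c - A * S := by
    rw [Finset.sum_sub_distrib, Finset.sum_const, Finset.card_univ, Fintype.card_fin, hS,
      Finset.mul_sum]
    simp [nsmul_eq_mul, mul_one_div, div_eq_mul_inv]
  have hχeq : χ r = 1 + ((n:ℝ) * c - A * S) := by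
    rw [hχr, hc, hA]; ring
  rw [hval] at hsum
  linarith [hsum, hχpos, hχeq]
end

section
/- Let n ≥ 1, let A ∈ (1, 2], let α_1, …, α_n ∈ [0, π), and set S = Σ_{j=1}^n sec(α_j/2). Define ψ(r) = ((A + 3 − 4n)/(A − 1)) r² − (2/(A − 1)) (A + 1 + 2AS) r + 1, and let R be the smallest zero of ψ in (0, 1) (such a zero exists). Let F be analytic on the open unit disk D with F′(z) ≠ 0 for all z ∈ D, and suppose that for every z ∈ D with |z| = r there exist b ∈ (0,∞) and complex numbers u_1, …, u_n, v_1, …, v_n satisfying |u_j − 2r²/(1 − r²)| ≤ 2Ar/(1 − r²) and |v_j − 2r²/(1 − r²)| ≤ 2Ar/(1 − r²) for every j, such that z F″(z)/F′(z) = Σ_{j=1}^n u_j/(1 + b e^{iα_j}) + Σ_{j=1}^n v_j/(1 + b^{-1} e^{-iα_j}). Then Re T_F(z) > 0 for all z with |z| < R. -/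
open Real Finset

lemma wabs_sq (b : ℝ) (a : ℝ) :
    (‖1 + (b:ℂ) * Complex.exp (Complex.I * a)‖)^2
      = (1 - b)^2 + 2*b*(1 + Real.cos a) := by
  have he : Complex.exp (Complex.I * a)
      = (Real.cos a : ℂ) + (Real.sin a : ℂ) * Complex.I := by
    rw [mul_comm, Complex.exp_mul_I, Complex.ofReal_cos, Complex.ofReal_sin]
  have hw : 1 + (b:ℂ) * Complex.exp (Complex.I * a)
      = ((1 + b * Real.cos a : ℝ) : ℂ) + ((b * Real.sin a : ℝ) : ℂ) * Complex.I := by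
    rw [he]; push_cast; ring
  rw [hw, Complex.sq_norm, Complex.normSq_add_mul_I]
  have hsc := Real.sin_sq_add_cos_sq a
  linear_combination (b^2) * hsc

lemma wne (b : ℝ) (hb : 0 < b) (a : ℝ) (ha0 : 0 ≤ a) (haπ : a < π) :
    (1 + (b:ℂ) * Complex.exp (Complex.I * a)) ≠ 0 := by
  intro h
  have h2 := wabs_sq b a
  rw [h] at h2
  simp at h2
  have hc : Real.cos π < Real.cos a := by
    apply Real.cos_lt_cos_of_nonneg_of_le_pi ha0 le_rfl haπ
  rw [Real.cos_pi] at hc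
  nlinarith [sq_nonneg (1 - b)]

lemma pair_bound (b : ℝ) (hb : 0 < b) (a : ℝ) (ha0 : 0 ≤ a) (haπ : a < π) :
    ‖(1 + (b:ℂ) * Complex.exp (Complex.I * a))⁻¹‖
      + ‖1 - (1 + (b:ℂ) * Complex.exp (Complex.I * a))⁻¹‖
      ≤ 1 / Real.cos (a / 2) := by
  set e : ℂ := Complex.exp (Complex.I * a) with he
  set w : ℂ := 1 + (b:ℂ) * e with hwdef
  have hw : w ≠ 0 := wne b hb a ha0 haπ
  have habse : ‖e‖ = 1 := by
    rw [he, Complex.norm_exp]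
    simp
  have habsw_pos : 0 < ‖w‖ := by
    simpa using hw
  have h1c : 1 - w⁻¹ = (b:ℂ) * e / w := by
    field_simp
    rw [hwdef]; ring
  have habs1c : ‖1 - w⁻¹‖ = b / ‖w‖ := by
    rw [h1c, norm_div, norm_mul, habse, Complex.norm_real, Real.norm_of_nonneg hb.le, mul_one]
  have habsinv : ‖w⁻¹‖ = 1 / ‖w‖ := by
    rw [norm_inv, one_div]
  rw [habs1c, habsinv]
  have hcos : 0 < Real.cos (a / 2) := by
    apply Real.cos_pos_of_mem_Ioo
    constructor
    · linarith [Real.pi_pos]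
    · linarith
  rw [← add_div, div_le_div_iff₀ habsw_pos hcos]
  have hsq : ((1 + b) * Real.cos (a / 2))^2 ≤ (‖w‖)^2 := by
    have h2 := wabs_sq b a
    have h3 : Real.cos (a/2)^2 = 1/2 + Real.cos a / 2 := by
      rw [Real.cos_sq, show 2*(a/2) = a by ring]
    have hca : Real.cos a ≤ 1 := Real.cos_le_one a
    nlinarith [sq_nonneg (1 - b), mul_nonneg (sq_nonneg (1-b)) (sub_nonneg.2 hca)]
  have h1b : 0 ≤ (1 + b) * Real.cos (a / 2) := by positivity
  nlinarith [habsw_pos, hsq, h1b]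

lemma cayley_re (z : ℂ) (hz : ‖z‖ < 1) :
    (1 - ‖z‖) / (1 + ‖z‖) ≤ ((1 + z) / (1 - z)).re := by
  have hzne : (1 : ℂ) - z ≠ 0 := by
    intro h
    have hz1 : z = 1 := by linear_combination -h
    rw [hz1] at hz; simp at hz
  set r := ‖z‖ with hr
  have hr0 : 0 ≤ r := norm_nonneg z
  have hns : 0 < Complex.normSq (1 - z) := Complex.normSq_pos.2 hzne
  have hsq : z.re^2 + z.im^2 = r^2 := by
    rw [hr, Complex.sq_norm, Complex.normSq_apply]; ring
  have hre : |z.re| ≤ r := Complex.abs_re_le_norm z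
  have hreexp : ((1 + z) / (1 - z)).re
      = (1 - r^2) / Complex.normSq (1 - z) := by
    rw [Complex.div_re]
    have h1 : (1 + z).re = 1 + z.re := by simp
    have h2 : (1 - z).re = 1 - z.re := by simp
    have h3 : (1 + z).im = z.im := by simp
    have h4 : (1 - z).im = -z.im := by simp
    rw [h1, h2, h3, h4, ← add_div]
    congr 1
    nlinarith [hsq]
  rw [hreexp]
  have hnsle : Complex.normSq (1 - z) ≤ (1 + r)^2 := by
    have : Complex.normSq (1 - z) = 1 - 2*z.re + (z.re^2 + z.im^2) := by
      rw [Complex.normSq_apply]; simp; ring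
    rw [this, hsq]
    nlinarith [abs_le.1 hre]
  have h1r2 : 0 ≤ 1 - r^2 := by nlinarith
  have h1r : 0 < 1 + r := by linarith
  calc (1 - r) / (1 + r) = (1 - r^2) / (1 + r)^2 := by
        rw [div_eq_div_iff (by linarith) (by positivity)]; ring
    _ ≤ (1 - r^2) / Complex.normSq (1 - z) :=
        div_le_div_of_nonneg_left h1r2 hns hnsle

lemma inv_term (b : ℝ) (hb : 0 < b) (a : ℝ) (ha0 : 0 ≤ a) (haπ : a < π) (x : ℂ) :
    x / (1 + (b:ℂ)⁻¹ * Complex.exp (-(Complex.I * a)))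
      = x * (1 - (1 + (b:ℂ) * Complex.exp (Complex.I * a))⁻¹) := by
  set e : ℂ := Complex.exp (Complex.I * a) with he
  have hene : e ≠ 0 := Complex.exp_ne_zero _
  have hbne : (b:ℂ) ≠ 0 := by exact_mod_cast hb.ne'
  have hw : (1 + (b:ℂ) * e) ≠ 0 := wne b hb a ha0 haπ
  have hexpneg : Complex.exp (-(Complex.I * a)) = e⁻¹ := by
    rw [he, ← Complex.exp_neg]
  rw [hexpneg]
  have hdenom : (1 + (b:ℂ)⁻¹ * e⁻¹) = (1 + (b:ℂ) * e) / ((b:ℂ) * e) := by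
    field_simp
    ring
  rw [hdenom, div_div_eq_mul_div, div_eq_mul_inv, mul_assoc]
  congr 1
  field_simp
  ring

/-- **Statement 6**: radius of concavity (w.r.t. `Co(A)`) for functions whose
logarithmic second-derivative expression decomposes as a combination of terms
satisfying the estimate valid for the class `Co(A)`. -/
theorem stmt_10 (n : ℕ) (hn : 1 ≤ n) (A : ℝ) (hA : A ∈ Set.Ioc (1 : ℝ) 2)
    (α : Fin n → ℝ) (hα : ∀ j, α j ∈ Set.Ico (0 : ℝ) π)
    (S : ℝ) (hS : S = ∑ j, 1 / Real.cos (α j / 2))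
    (ψ : ℝ → ℝ)
    (hψ : ψ = fun r => ((A + 3 - 4 * n) / (A - 1)) * r ^ 2
        - (2 / (A - 1)) * (A + 1 + 2 * A * S) * r + 1)
    (R : ℝ) (hR : R ∈ Set.Ioo (0 : ℝ) 1) (hRzero : ψ R = 0)
    (hRmin : ∀ r ∈ Set.Ioo (0 : ℝ) 1, ψ r = 0 → R ≤ r)
    (F : ℂ → ℂ) (hF : DifferentiableOn ℂ F (Metric.ball 0 1))
    (hF' : ∀ z ∈ Metric.ball (0 : ℂ) 1, deriv F z ≠ 0)
    (hdec : ∀ z ∈ Metric.ball (0 : ℂ) 1, ∀ r : ℝ, r = ‖z‖ →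
      ∃ b : ℝ, 0 < b ∧ ∃ u v : Fin n → ℂ,
        (∀ j, ‖u j - ((2 * r ^ 2 / (1 - r ^ 2) : ℝ) : ℂ)‖
            ≤ 2 * A * r / (1 - r ^ 2)) ∧
        (∀ j, ‖v j - ((2 * r ^ 2 / (1 - r ^ 2) : ℝ) : ℂ)‖
            ≤ 2 * A * r / (1 - r ^ 2)) ∧
        z * deriv (deriv F) z / deriv F z
          = ∑ j, u j / (1 + (b : ℂ) * Complex.exp (Complex.I * (α j : ℂ)))
            + ∑ j, v j / (1 + (b : ℂ)⁻¹ * Complex.exp (-(Complex.I * (α j : ℂ))))) :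
    ∀ z : ℂ, ‖z‖ < R →
      0 < (((2 : ℂ) / ((A : ℂ) - 1)) * (((A : ℂ) + 1) / 2 * (1 + z) / (1 - z) - 1
          - z * deriv (deriv F) z / deriv F z)).re := by
  obtain ⟨hA1, hA2⟩ := hA
  obtain ⟨hR0, hR1⟩ := hR
  -- positivity of ψ on [0, R)
  have hψpos : ∀ r : ℝ, 0 ≤ r → r < R → 0 < ψ r := by
    intro r hr0 hrR
    by_contra hcon
    push_neg at hcon
    have hψ0 : ψ 0 = 1 := by rw [hψ]; norm_num
    have hcont : ContinuousOn ψ (Set.Icc 0 r) := by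
      rw [hψ]; fun_prop
    have hmem : (0 : ℝ) ∈ Set.Icc (ψ r) (ψ 0) := ⟨hcon, by rw [hψ0]; norm_num⟩
    obtain ⟨c, hc, hψc⟩ := intermediate_value_Icc' hr0 hcont hmem
    have hc0 : c ≠ 0 := by
      intro h; rw [h, hψ0] at hψc; norm_num at hψc
    have hcIoo : c ∈ Set.Ioo (0 : ℝ) 1 :=
      ⟨lt_of_le_of_ne hc.1 (Ne.symm hc0), lt_of_le_of_lt hc.2 (lt_trans hrR hR1)⟩
    have := hRmin c hcIoo hψc
    linarith [hc.2]
  intro z hzR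
  set r := ‖z‖ with hrdef
  have hr0 : 0 ≤ r := norm_nonneg z
  have hrR : r < R := hzR
  have hr1 : r < 1 := lt_trans hrR hR1
  have h1r2 : 0 < 1 - r^2 := by nlinarith
  have hzball : z ∈ Metric.ball (0 : ℂ) 1 := by
    rw [Metric.mem_ball, dist_zero_right]; exact hr1
  obtain ⟨b, hb, u, v, hu, hv, heq⟩ := hdec z hzball r rfl
  set m : ℝ := 2 * r^2 / (1 - r^2) with hm
  set K : ℝ := 2 * A * r / (1 - r^2) with hK
  have hK0 : 0 ≤ K := by
    apply div_nonneg _ (le_of_lt h1r2)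
    positivity
  set Q : ℂ := z * deriv (deriv F) z / deriv F z with hQ
  set w : Fin n → ℂ := fun j => 1 + (b:ℂ) * Complex.exp (Complex.I * (α j : ℂ)) with hw
  -- rewrite Q as combined sum
  have hQsum : Q = ∑ j, (u j * (w j)⁻¹ + v j * (1 - (w j)⁻¹)) := by
    rw [heq, ← Finset.sum_add_distrib]
    apply Finset.sum_congr rfl
    intro j _
    have e1 : w j = 1 + (b:ℂ) * Complex.exp (Complex.I * ((α j : ℝ) : ℂ)) := by rw [hw]
    rw [e1, inv_term b hb (α j) (hα j).1 (hα j).2 (v j), div_eq_mul_inv]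
  -- per-term real-part bound
  have hterm : ∀ j : Fin n,
      (u j * (w j)⁻¹ + v j * (1 - (w j)⁻¹)).re ≤ m + K * (1 / Real.cos (α j / 2)) := by
    intro j
    set c : ℂ := (w j)⁻¹ with hc
    have hsplit : u j * c + v j * (1 - c)
        = (m : ℂ) + ((u j - (m:ℂ)) * c + (v j - (m:ℂ)) * (1 - c)) := by ring
    rw [hsplit]
    rw [Complex.add_re, Complex.ofReal_re]
    have hb1 : ((u j - (m:ℂ)) * c + (v j - (m:ℂ)) * (1 - c)).re
        ≤ K * (1 / Real.cos (α j / 2)) := by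
      calc ((u j - (m:ℂ)) * c + (v j - (m:ℂ)) * (1 - c)).re
          ≤ ‖(u j - (m:ℂ)) * c + (v j - (m:ℂ)) * (1 - c)‖ :=
            Complex.re_le_norm _
        _ ≤ ‖(u j - (m:ℂ)) * c‖ + ‖(v j - (m:ℂ)) * (1 - c)‖ :=
            norm_add_le _ _
        _ = ‖u j - (m:ℂ)‖ * ‖c‖
            + ‖v j - (m:ℂ)‖ * ‖1 - c‖ := by
            rw [norm_mul, norm_mul]
        _ ≤ K * ‖c‖ + K * ‖1 - c‖ := by
            apply add_le_add
            · exact mul_le_mul_of_nonneg_right (hu j) (norm_nonneg _)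
            · exact mul_le_mul_of_nonneg_right (hv j) (norm_nonneg _)
        _ = K * (‖c‖ + ‖1 - c‖) := by ring
        _ ≤ K * (1 / Real.cos (α j / 2)) := by
            apply mul_le_mul_of_nonneg_left _ hK0
            exact pair_bound b hb (α j) (hα j).1 (hα j).2
    linarith
  -- bound on Q.re
  have hQre : Q.re ≤ n * m + K * S := by
    rw [hQsum, Complex.re_sum]
    calc ∑ j, (u j * (w j)⁻¹ + v j * (1 - (w j)⁻¹)).re
        ≤ ∑ j, (m + K * (1 / Real.cos (α j / 2))) :=
          Finset.sum_le_sum (fun j _ => hterm j)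
      _ = n * m + K * S := by
          rw [Finset.sum_add_distrib, Finset.sum_const, ← Finset.mul_sum, hS]
          simp [nsmul_eq_mul]
  -- Cayley bound
  have hP := cayley_re z hr1
  set P : ℝ := ((1 + z) / (1 - z)).re with hPdef
  -- rewrite the goal with real scalars
  have hcast : ((2 : ℂ) / ((A : ℂ) - 1)) * (((A : ℂ) + 1) / 2 * (1 + z) / (1 - z) - 1
      - z * deriv (deriv F) z / deriv F z)
      = ((2 / (A - 1) : ℝ) : ℂ) * ((((A + 1) / 2 : ℝ) : ℂ) * ((1 + z) / (1 - z)) - 1 - Q) := by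
    rw [hQ]; push_cast; ring
  rw [hcast, Complex.re_ofReal_mul, Complex.sub_re, Complex.sub_re,
    Complex.re_ofReal_mul, Complex.one_re, ← hPdef]
  have hA1' : 0 < A - 1 := by linarith
  apply mul_pos (by positivity)
  -- key algebraic inequality
  have hmain : 0 < (A + 1) / 2 * ((1 - r) / (1 + r)) - 1 - ((n : ℝ) * m + K * S) := by
    have hψr := hψpos r hr0 hrR
    have hid : (A + 1) / 2 * ((1 - r) / (1 + r)) - 1 - ((n : ℝ) * m + K * S)
        = (A - 1) / (2 * (1 - r^2)) * ψ r := by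
      rw [hψ, hm, hK]
      have h1r : (1 : ℝ) + r ≠ 0 := by positivity
      have h1r2' : (1 : ℝ) - r^2 ≠ 0 := h1r2.ne'
      field_simp
      ring
    rw [hid]
    exact mul_pos (by positivity) hψr
  have hPmul : (A + 1) / 2 * ((1 - r) / (1 + r)) ≤ (A + 1) / 2 * P :=
    mul_le_mul_of_nonneg_left hP (by linarith)
  linarith
end
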